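/- Let κ ≥ 1 be real, γ = 1 − 1/κ, α > 0, and set s = (1 − √γ)^{−2}. Then (1/4) · (κ²α/(κ²α + 1)) ≤ s·α/(s·α + 1) ≤ 4 · (κ²α/(κ²α + 1)). Hence the minimal excess-risk upper bound of private gradient descent with the optimal dynamic schedule, which equals sα/(sα + 1), is Θ(κ²α/(κ²α + 1)) with absolute constants 1/4 and 4. -/

import Mathlib

/-- **The minimal dynamic-schedule bound is `Θ(κ²α/(κ²α + 1))` with constants 1/4 and 4.**
For real `κ ≥ 1`, `γ = 1 - 1/κ`, `α > 0` and `s = (1 - √γ)⁻²`,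
`(1/4) κ²α/(κ²α + 1) ≤ sα/(sα + 1) ≤ 4 κ²α/(κ²α + 1)`. -/
theorem dynamic_schedule_min_theta_bound
    (κ α : ℝ) (hκ : 1 ≤ κ) (hα : 0 < α) :
    let γ : ℝ := 1 - 1 / κ
    let s : ℝ := ((1 - Real.sqrt γ)⁻¹) ^ 2
    (1 / 4) * (κ ^ 2 * α / (κ ^ 2 * α + 1)) ≤ s * α / (s * α + 1) ∧
      s * α / (s * α + 1) ≤ 4 * (κ ^ 2 * α / (κ ^ 2 * α + 1)) := by
  intro γ s
  have hκ0 : (0:ℝ) < κ := lt_of_lt_of_le one_pos hκ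
  have hγ0 : 0 ≤ γ := by
    have : 1 / κ ≤ 1 := by
      rw [div_le_one hκ0]; exact hκ
    simp only [γ]; linarith
  have hγ1 : γ < 1 := by
    have : 0 < 1 / κ := by positivity
    simp only [γ]; linarith
  set g := Real.sqrt γ with hg
  have hg0 : 0 ≤ g := Real.sqrt_nonneg _
  have hgsq : g ^ 2 = γ := Real.sq_sqrt hγ0
  have hg1 : g < 1 := by nlinarith [hgsq, hγ1, hg0]
  have h1g : 0 < 1 - g := by linarith
  have hmul : κ * (1 + g) * (1 - g) = 1 := by
    have h2 : 1 - g ^ 2 = 1 / κ := by rw [hgsq]; simp [γ]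
    field_simp at h2
    nlinarith [h2]
  have hinv : (1 - g)⁻¹ = κ * (1 + g) := inv_eq_of_mul_eq_one_left hmul
  have hs : s = κ ^ 2 * (1 + g) ^ 2 := by
    simp only [s]; rw [← hg, hinv]; ring
  have hslb : κ ^ 2 ≤ s := by
    rw [hs]
    nlinarith [sq_nonneg g, sq_nonneg κ, hg0, hκ0.le]
  have hsub : s ≤ 4 * κ ^ 2 := by
    rw [hs]
    nlinarith [sq_nonneg κ, hg0, hg1]
  have hA : 0 < κ ^ 2 * α := by positivity
  have hspos : 0 < s := lt_of_lt_of_le (by positivity) hslb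
  have hB : 0 < s * α := by positivity
  constructor
  · have h : κ ^ 2 * α / (κ ^ 2 * α + 1) ≤ s * α / (s * α + 1) := by
      rw [div_le_div_iff₀ (by linarith) (by linarith)]
      nlinarith [mul_le_mul_of_nonneg_right hslb hα.le]
    nlinarith [div_nonneg hA.le (by linarith : (0:ℝ) ≤ κ ^ 2 * α + 1), h]
  · rw [div_le_iff₀ (by linarith), mul_comm (4:ℝ), mul_assoc, div_mul_eq_mul_div,
      le_div_iff₀ (by linarith)]
    nlinarith [mul_le_mul_of_nonneg_right hsub hα.le, hB.le, hA.le,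
      mul_pos hA hB]
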